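/- The ⊑ (sub-term-set) relation is a forward simulation: for extended applicative terms u, v over a grammar G', if u ⊑ v and u → u' (one-step reduction in G'), then there exists v' with v →* v' and u' ⊑ v'. Here u ⊑ v is defined inductively: heads (variables, non-terminals, terminals) relate to themselves; u U ⊑ u' U' if u ⊑ u' and U ⊑ U'; and for term sets, U ⊑ U' if every member of U is ⊑ some member of U'. Moreover, if π is a tree with π ⊑ v, then v →* π. -/

import Mathlib

/-- Extended terms u ::= x | A | a | u U | λx.u, where an argument
    U = {u₁,…,u_k} (k ≥ 1) is a non-empty set of terms representing
    non-deterministic choice (represented as a list). -/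
inductive ETm (V N T : Type) where
  | var : V → ETm V N T
  | nt : N → ETm V N T
  | tm : T → ETm V N T
  | app : ETm V N T → List (ETm V N T) → ETm V N T
  | lam : V → ETm V N T → ETm V N T

/-- Iterated application of a head to a list of argument sets. -/
def appLE {V N T : Type} : ETm V N T → List (List (ETm V N T)) → ETm V N T
  | u, [] => u
  | u, U :: Us => appLE (.app u U) Us

/-- The set-valued substitution [σ]u of term-sets for variables in an
    extended term. -/
def dsub {V N T : Type} [DecidableEq V]
    (σ : V → Option (List (ETm V N T))) : ETm V N T → List (ETm V N T)
  | .var x => (σ x).getD [.var x]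
  | .nt A => [.nt A]
  | .tm a => [.tm a]
  | .app u U =>
      (dsub σ u).map (fun v => .app v (U.attach.flatMap (fun w => dsub σ w.1)))
  | .lam x u =>
      (dsub (fun y => if y = x then none else σ y) u).map (.lam x)
termination_by u => sizeOf u
decreasing_by
  all_goals simp_wf
  all_goals first
    | omega
    | (have := List.sizeOf_lt_of_mem w.2; omega)

/-- v ∈ [σ]u : v is one of the results of the set-valued substitution. -/
def DSub {V N T : Type} [DecidableEq V]
    (σ : V → Option (List (ETm V N T))) (u v : ETm V N T) : Prop :=
  v ∈ dsub σ u

/-- An extended higher-order grammar: rules A x₁ ⋯ x_k → u. -/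
structure EGrammar (V N T : Type) (ar : T → Nat) where
  start : N
  rules : N → List V → ETm V N T → Prop

/-- The substitution sending the parameters xs to the argument sets Us. -/
def sigmaOf {V N T : Type} [DecidableEq V] (xs : List V)
    (Us : List (List (ETm V N T))) : V → Option (List (ETm V N T)) :=
  fun x => ((xs.zip Us).find? (fun p => p.1 = x)).map Prod.snd

/-- One-step reduction of extended terms: a fully applied non-terminal is
    rewritten (lazily, via the set-valued substitution); under a terminal,
    either a singleton argument is reduced, or a non-singleton argument set is
    collapsed to one of its members. -/
inductive ERed {V N T : Type} [DecidableEq V] {ar : T → Nat}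
    (G : EGrammar V N T ar) : ETm V N T → ETm V N T → Prop where
  | step {A xs body Us u'} : G.rules A xs body → Us.length = xs.length →
      DSub (sigmaOf xs Us) body u' →
      ERed G (appLE (.nt A) Us) u'
  | ctx {a u u' Us₁ Us₂} : ERed G u u' →
      Us₁.length + 1 + Us₂.length = ar a →
      ERed G (appLE (.tm a) (Us₁ ++ [u] :: Us₂))
             (appLE (.tm a) (Us₁ ++ [u'] :: Us₂))
  | collapse {a u U Us₁ Us₂} : u ∈ U → U.length ≠ 1 →
      Us₁.length + 1 + Us₂.length = ar a →
      ERed G (appLE (.tm a) (Us₁ ++ U :: Us₂))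
             (appLE (.tm a) (Us₁ ++ [u] :: Us₂))

/-- Many-step reduction of extended terms. -/
def ERedStar {V N T : Type} [DecidableEq V] {ar : T → Nat}
    (G : EGrammar V N T ar) : ETm V N T → ETm V N T → Prop :=
  Relation.ReflTransGen (ERed G)

/-- Trees over a ranked alphabet (T, ar). -/
inductive GTr (T : Type) (ar : T → Nat) where
  | mk (a : T) (f : Fin (ar a) → GTr T ar)

/-- A tree as an extended term (all argument sets singletons). -/
def GTr.toETm {V N T : Type} {ar : T → Nat} : GTr T ar → ETm V N T
  | .mk a f => appLE (.tm a) (List.ofFn (fun i => [(f i).toETm]))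

mutual
  /-- The sub-term-set relation u ⊑ v on extended terms. -/
  inductive ESub {V N T : Type} : ETm V N T → ETm V N T → Prop where
    | var {x} : ESub (.var x) (.var x)
    | nt {A} : ESub (.nt A) (.nt A)
    | tm {a} : ESub (.tm a) (.tm a)
    | app {u u' U U'} : ESub u u' → ESubL U U' → ESub (.app u U) (.app u' U')
    | lam {x u u'} : ESub u u' → ESub (.lam x u) (.lam x u')

  /-- U ⊑ U' for term sets: every member of U is ⊑ some member of U'. -/
  inductive ESubL {V N T : Type} : List (ETm V N T) → List (ETm V N T) → Prop where
    | nil {U'} : ESubL [] U'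
    | cons {v U U'} : ESubMem v U' → ESubL U U' → ESubL (v :: U) U'

  /-- v is ⊑ some member of the term set U'. -/
  inductive ESubMem {V N T : Type} : ETm V N T → List (ETm V N T) → Prop where
    | hd {v v' U'} : ESub v v' → ESubMem v (v' :: U')
    | tl {v v' U'} : ESubMem v U' → ESubMem v (v' :: U')
end

section MyAux
variable {V N T : Type}

theorem myESubMem_of_mem {u v : ETm V N T} {W} (h : ESub u v) (hv : v ∈ W) :
    ESubMem u W := by
  induction W with
  | nil => cases hv
  | cons w W ih =>
    rcases List.mem_cons.1 hv with rfl | hv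
    · exact .hd h
    · exact .tl (ih hv)

theorem myESubMem_elim {u : ETm V N T} : ∀ {W}, ESubMem u W →
    ∃ v ∈ W, ESub u v := by
  intro W
  induction W with
  | nil => intro h; cases h
  | cons w W ih =>
    intro h
    cases h with
    | hd h => exact ⟨w, List.mem_cons_self .., h⟩
    | tl h => rcases ih h with ⟨v, hv, hs⟩; exact ⟨v, List.mem_cons_of_mem _ hv, hs⟩

theorem myESubL_of_forall {U W : List (ETm V N T)} (h : ∀ u ∈ U, ∃ v ∈ W, ESub u v) :
    ESubL U W := by
  induction U with
  | nil => exact .nil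
  | cons u U ih =>
    rcases h u (by simp) with ⟨v, hv, hs⟩
    exact .cons (myESubMem_of_mem hs hv) (ih fun u hu => h u (by simp [hu]))

theorem myESubL_forall {W : List (ETm V N T)} : ∀ {U}, ESubL U W →
    ∀ u ∈ U, ∃ v ∈ W, ESub u v := by
  intro U
  induction U with
  | nil => intro _ u hu; cases hu
  | cons x U ih =>
    intro h u hu
    cases h with
    | cons hm hL =>
      rcases List.mem_cons.1 hu with rfl | hu
      · exact myESubMem_elim hm
      · exact ih hL u hu

theorem myESub_refl : ∀ u : ETm V N T, ESub u u := by
  have H : ∀ n (u : ETm V N T), sizeOf u ≤ n → ESub u u := by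
    intro n
    induction n with
    | zero => intro u h; exfalso; cases u <;> simp at h
    | succ n ih =>
      intro u h
      match u with
      | .var x => exact .var
      | .nt A => exact .nt
      | .tm a => exact .tm
      | .lam x u => exact .lam (ih u (by simp at h; omega))
      | .app u U =>
        refine .app (ih u (by simp at h; omega)) (myESubL_of_forall ?_)
        intro v hv
        exact ⟨v, hv, ih v (by have := List.sizeOf_lt_of_mem hv; simp at h; omega)⟩
  exact fun u => H _ u le_rfl

theorem myAppLE_append (u : ETm V N T) (Us Vs) :
    appLE u (Us ++ Vs) = appLE (appLE u Us) Vs := by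
  induction Us generalizing u with
  | nil => rfl
  | cons U Us ih => simp [appLE, ih]

theorem myAppLE_snoc (u : ETm V N T) (Us U) :
    appLE u (Us ++ [U]) = .app (appLE u Us) U := by
  rw [myAppLE_append]; rfl

theorem myESub_appLE {h h' : ETm V N T} {Us Vs} (hs : ESub h h')
    (hF : List.Forall₂ ESubL Us Vs) : ESub (appLE h Us) (appLE h' Vs) := by
  induction hF generalizing h h' with
  | nil => exact hs
  | cons h1 _ ih => exact ih (.app hs h1)

theorem myESub_appLE_inv {h : ETm V N T} (hh : ∀ w, ESub h w → w = h) :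
    ∀ Us w, ESub (appLE h Us) w →
      ∃ Vs, w = appLE h Vs ∧ List.Forall₂ ESubL Us Vs := by
  intro Us
  induction Us using List.reverseRecOn with
  | nil => intro w hw; exact ⟨[], (hh w hw).symm ▸ ⟨rfl, .nil⟩⟩
  | append_singleton Us U ih =>
    intro w hw
    rw [myAppLE_snoc] at hw
    cases hw with
    | app h1 h2 =>
      rcases ih _ h1 with ⟨Vs, rfl, hF⟩
      exact ⟨Vs ++ [_], (myAppLE_snoc ..).symm,
        List.rel_append hF (List.Forall₂.cons h2 List.Forall₂.nil)⟩

theorem myForall₂_decomp {α β : Type*} {R : α → β → Prop} :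
    ∀ {l₁ : List α} {a : α} {l₂ : List α} {l : List β},
    List.Forall₂ R (l₁ ++ a :: l₂) l →
    ∃ m₁ b m₂, l = m₁ ++ b :: m₂ ∧ List.Forall₂ R l₁ m₁ ∧ R a b ∧
      List.Forall₂ R l₂ m₂ := by
  intro l₁
  induction l₁ with
  | nil =>
    intro a l₂ l h
    cases h with
    | cons h1 h2 => exact ⟨[], _, _, rfl, .nil, h1, h2⟩
  | cons x l₁ ih =>
    intro a l₂ l h
    cases h with
    | cons h1 h2 =>
      rcases ih h2 with ⟨m₁, b, m₂, rfl, hF₁, hab, hF₂⟩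
      exact ⟨_ :: m₁, b, m₂, rfl, .cons h1 hF₁, hab, hF₂⟩

theorem mySingleton_of_len {α : Type*} {l : List α} {v : α}
    (h1 : l.length = 1) (hv : v ∈ l) : l = [v] := by
  cases l with
  | nil => cases hv
  | cons w W =>
    cases W with
    | nil => simp at hv; subst hv; rfl
    | cons => simp at h1

variable {ar : T → Nat} [DecidableEq V] {G : EGrammar V N T ar}

theorem myCtxStar {a u u'} {Us₁ Us₂ : List (List (ETm V N T))}
    (h : ERedStar G u u') (hlen : Us₁.length + 1 + Us₂.length = ar a) :
    ERedStar G (appLE (.tm a) (Us₁ ++ [u] :: Us₂))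
      (appLE (.tm a) (Us₁ ++ [u'] :: Us₂)) := by
  induction h with
  | refl => exact .refl
  | tail _ h2 ih => exact .tail ih (.ctx h2 hlen)

theorem myArgStar {a} {t : ETm V N T} {P S : List (List (ETm V N T))}
    {Vset : List (ETm V N T)}
    (hm : ESubMem t Vset) (ht : ∀ v, ESub t v → ERedStar G v t)
    (hlen : P.length + 1 + S.length = ar a) :
    ERedStar G (appLE (.tm a) (P ++ Vset :: S)) (appLE (.tm a) (P ++ [t] :: S)) := by
  rcases myESubMem_elim hm with ⟨v, hv, hs⟩
  by_cases h1 : Vset.length = 1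
  · rw [mySingleton_of_len h1 hv]
    exact myCtxStar (ht _ hs) hlen
  · exact .head (.collapse hv h1 hlen) (myCtxStar (ht _ hs) hlen)

theorem myArgsStar {a} :
    ∀ {Vs : List (List (ETm V N T))} {Ts : List (ETm V N T)},
    List.Forall₂ (fun Vset t => ESubMem t Vset ∧ ∀ v, ESub t v → ERedStar G v t)
      Vs Ts →
    ∀ P : List (List (ETm V N T)), P.length + Vs.length = ar a →
    ERedStar G (appLE (.tm a) (P ++ Vs))
      (appLE (.tm a) (P ++ Ts.map (fun t => [t]))) := by
  intro Vs Ts hF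
  induction hF with
  | nil => intro P _; simp; exact .refl
  | @cons Vset t Vs Ts h1 _ ih =>
    intro P hlen
    have step1 := myArgStar (G := G) (a := a) (P := P) (S := Vs) h1.1 h1.2
      (by simp at hlen ⊢; omega)
    have step2 := ih (P ++ [[t]]) (by simp at hlen ⊢; omega)
    refine step1.trans ?_
    simpa [ERedStar, List.append_assoc] using step2

def MySigRel (σ τ : V → Option (List (ETm V N T))) : Prop :=
  ∀ x, (σ x = none ∧ τ x = none) ∨ ∃ U W, σ x = some U ∧ τ x = some W ∧ ESubL U W

theorem myDsub_mono :
    ∀ (u : ETm V N T) (σ τ : V → Option (List (ETm V N T))), MySigRel σ τ →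
    ESubL (dsub σ u) (dsub τ u)
  | .var x, σ, τ, h => by
      rcases h x with ⟨h1, h2⟩ | ⟨U, W, h1, h2, hUW⟩
      · simp only [dsub, h1, h2, Option.getD_none]
        exact .cons (.hd .var) .nil
      · simpa only [dsub, h1, h2, Option.getD_some] using hUW
  | .nt A, σ, τ, h => by
      simp only [dsub]; exact .cons (.hd .nt) .nil
  | .tm a, σ, τ, h => by
      simp only [dsub]; exact .cons (.hd .tm) .nil
  | .lam x u, σ, τ, h => by
      simp only [dsub]
      have ih := myDsub_mono u (fun y => if y = x then none else σ y)
        (fun y => if y = x then none else τ y)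
        (fun y => by
          by_cases hy : y = x
          · exact Or.inl ⟨by simp [hy], by simp [hy]⟩
          · simpa only [if_neg hy] using h y)
      apply myESubL_of_forall
      intro w hw
      rcases List.mem_map.1 hw with ⟨w', hw', rfl⟩
      rcases myESubL_forall ih w' hw' with ⟨v', hv', hs⟩
      exact ⟨.lam x v', List.mem_map_of_mem hv', .lam hs⟩
  | .app u U, σ, τ, h => by
      simp only [dsub]
      have ihu := myDsub_mono u σ τ h
      have ihU : ESubL (U.attach.flatMap fun w => dsub σ w.1)
          (U.attach.flatMap fun w => dsub τ w.1) := by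
        apply myESubL_of_forall
        intro w hw
        rcases List.mem_flatMap.1 hw with ⟨⟨w', hw'⟩, hmem, hwin⟩
        rcases myESubL_forall (myDsub_mono w' σ τ h) w hwin with ⟨v, hv, hs⟩
        exact ⟨v, List.mem_flatMap.2 ⟨⟨w', hw'⟩, hmem, hv⟩, hs⟩
      apply myESubL_of_forall
      intro w hw
      rcases List.mem_map.1 hw with ⟨w', hw', rfl⟩
      rcases myESubL_forall ihu w' hw' with ⟨v, hv, hs⟩
      exact ⟨.app v _, List.mem_map_of_mem hv, .app hs ihU⟩
termination_by u => sizeOf u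
decreasing_by
  all_goals simp_wf
  all_goals first
    | omega
    | (have := List.sizeOf_lt_of_mem hw'; omega)

theorem mySigRel_sigmaOf :
    ∀ (xs : List V) (Us Vs : List (List (ETm V N T))),
    List.Forall₂ ESubL Us Vs → Us.length = xs.length →
    MySigRel (sigmaOf xs Us) (sigmaOf xs Vs) := by
  intro xs
  induction xs with
  | nil => intro Us Vs _ _ x; left; simp [sigmaOf]
  | cons y xs ih =>
    intro Us Vs hF hlen x
    cases hF with
    | nil => simp at hlen
    | @cons U W Us' Vs' h1 h2 =>
      by_cases hxy : y = x
      · exact Or.inr ⟨U, W, by simp [sigmaOf, hxy], by simp [sigmaOf, hxy], h1⟩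
      · have := ih Us' Vs' h2 (by simpa using hlen) x
        simpa only [sigmaOf, List.zip_cons_cons, List.find?_cons,
          decide_eq_true_eq, if_neg hxy, decide_eq_false hxy, cond_false] using this
end MyAux
section MyMain
variable {V N T : Type} [DecidableEq V] {ar : T → Nat} {G : EGrammar V N T ar}

theorem myPart1 (G : EGrammar V N T ar) :
    ∀ u v u' : ETm V N T, ESub u v → ERed G u u' →
      ∃ v', ERedStar G v v' ∧ ESub u' v' := by
  intro u v u' hsub hred
  induction hred generalizing v with
  | @step A xs body Us w hrule hlen hd =>
    rcases myESub_appLE_inv (fun w hw => by cases hw; rfl) _ _ hsub with ⟨Vs, rfl, hF⟩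
    have hrel := mySigRel_sigmaOf xs Us Vs hF hlen
    have hmono := myDsub_mono body _ _ hrel
    rcases myESubL_forall hmono w hd with ⟨v', hv', hs⟩
    exact ⟨v', Relation.ReflTransGen.single
      (.step hrule (by rw [← hF.length_eq]; exact hlen) hv'), hs⟩
  | @ctx a u₀ u₀' Us₁ Us₂ hred hlen ih =>
    rcases myESub_appLE_inv (fun w hw => by cases hw; rfl) _ _ hsub with ⟨Vs, rfl, hF⟩
    rcases myForall₂_decomp hF with ⟨Vs₁, Vset, Vs₂, rfl, hF₁, hV, hF₂⟩
    have hmem : ESubMem u₀ Vset := by cases hV with | cons hm _ => exact hm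
    rcases myESubMem_elim hmem with ⟨v₀, hv₀, hs₀⟩
    rcases ih v₀ hs₀ with ⟨v₀', hstar, hs'⟩
    have hlen' : Vs₁.length + 1 + Vs₂.length = ar a := by
      rw [← hF₁.length_eq, ← hF₂.length_eq]; exact hlen
    refine ⟨appLE (.tm a) (Vs₁ ++ [v₀'] :: Vs₂), ?_, ?_⟩
    · by_cases h1 : Vset.length = 1
      · rw [mySingleton_of_len h1 hv₀]
        exact myCtxStar hstar hlen'
      · exact Relation.ReflTransGen.head (.collapse hv₀ h1 hlen')
          (myCtxStar hstar hlen')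
    · exact myESub_appLE .tm (List.rel_append hF₁
        (List.Forall₂.cons (.cons (.hd hs') .nil) hF₂))
  | @collapse a u₀ U Us₁ Us₂ hu hU hlen =>
    rcases myESub_appLE_inv (fun w hw => by cases hw; rfl) _ _ hsub with ⟨Vs, rfl, hF⟩
    rcases myForall₂_decomp hF with ⟨Vs₁, Vset, Vs₂, rfl, hF₁, hV, hF₂⟩
    rcases myESubL_forall hV u₀ hu with ⟨v₀, hv₀, hs₀⟩
    refine ⟨_, Relation.ReflTransGen.refl, myESub_appLE .tm (List.rel_append hF₁
      (List.Forall₂.cons (.cons (myESubMem_of_mem hs₀ hv₀) .nil) hF₂))⟩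

theorem myPart2 (G : EGrammar V N T ar) :
    ∀ (π : GTr T ar) (v : ETm V N T), ESub π.toETm v → ERedStar G v π.toETm := by
  intro π
  induction π with
  | mk a f ih =>
    intro v hv
    rw [GTr.toETm] at hv ⊢
    rcases myESub_appLE_inv (fun w hw => by cases hw; rfl) _ _ hv with ⟨Vs, rfl, hF⟩
    have hlenV : Vs.length = ar a := by
      have := hF.length_eq; simpa using this.symm
    have hF' : List.Forall₂
        (fun Vset t => ESubMem t Vset ∧ ∀ w, ESub t w → ERedStar G w t)
        Vs (List.ofFn fun i => (f i).toETm) := by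
      rw [List.forall₂_iff_get]
      refine ⟨by simp [hlenV], ?_⟩
      intro i h₁ h₂
      rw [List.get_ofFn]
      have hi := (List.forall₂_iff_get.1 hF).2 i (by simpa using h₂) h₁
      rw [List.get_ofFn] at hi
      constructor
      · cases hi with | cons hm _ => exact hm
      · exact fun w hw => ih _ _ hw
    have hmain := myArgsStar (G := G) (a := a) hF' [] (by simpa using hlenV)
    simpa [List.map_ofFn, Function.comp_def] using hmain
end MyMain

/-- The relation ⊑ is a forward simulation for reduction of extended terms,
    and a tree below a term is reachable from it. -/
theorem stmt15 {V N T : Type} [DecidableEq V] {ar : T → Nat}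
    (G : EGrammar V N T ar) :
    (∀ u v u' : ETm V N T, ESub u v → ERed G u u' →
        ∃ v', ERedStar G v v' ∧ ESub u' v') ∧
    (∀ (π : GTr T ar) (v : ETm V N T), ESub π.toETm v →
        ERedStar G v π.toETm) := by
  exact ⟨myPart1 G, myPart2 G⟩
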